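/- Let X be an infinite Hausdorff ω-Lindelöf topological space. Then the following four properties are equivalent: (1) X satisfies α₂(Ω,Γ); (2) X satisfies α₃(Ω,Γ); (3) X satisfies α₄(Ω,Γ); (4) X satisfies S₁(Ω,Γ). -/

import Mathlib

open Set Filter Pointwise

universe u

/-- The selection principle `S₁(𝒜,ℬ)`: for each sequence of elements of `𝒜` one can pick one
element from each term so that the set of chosen elements belongs to `ℬ`. -/
def S1 {Y : Type u} (cA cB : Set (Set Y)) : Prop :=
  ∀ A : ℕ → Set Y, (∀ n, A n ∈ cA) →
    ∃ b : ℕ → Y, (∀ n, b n ∈ A n) ∧ Set.range b ∈ cB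

/-- `α₁(𝒜,ℬ)`: for each sequence of infinite elements of `𝒜` there is `B ∈ ℬ` such that
`Aₙ \ B` is finite for each `n`. -/
def Alpha1 {Y : Type u} (cA cB : Set (Set Y)) : Prop :=
  ∀ A : ℕ → Set Y, (∀ n, A n ∈ cA ∧ (A n).Infinite) →
    ∃ B ∈ cB, ∀ n, (A n \ B).Finite

/-- `α₂(𝒜,ℬ)`: for each sequence of infinite elements of `𝒜` there is `B ∈ ℬ` such that
`Aₙ ∩ B` is infinite for each `n`. -/
def Alpha2 {Y : Type u} (cA cB : Set (Set Y)) : Prop :=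
  ∀ A : ℕ → Set Y, (∀ n, A n ∈ cA ∧ (A n).Infinite) →
    ∃ B ∈ cB, ∀ n, (A n ∩ B).Infinite

/-- `α₃(𝒜,ℬ)`: for each sequence of infinite elements of `𝒜` there is `B ∈ ℬ` such that
`Aₙ ∩ B` is infinite for infinitely many `n`. -/
def Alpha3 {Y : Type u} (cA cB : Set (Set Y)) : Prop :=
  ∀ A : ℕ → Set Y, (∀ n, A n ∈ cA ∧ (A n).Infinite) →
    ∃ B ∈ cB, {n : ℕ | (A n ∩ B).Infinite}.Infinite

/-- `α₄(𝒜,ℬ)`: for each sequence of infinite elements of `𝒜` there is `B ∈ ℬ` such that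
`Aₙ ∩ B` is nonempty for infinitely many `n`. -/
def Alpha4 {Y : Type u} (cA cB : Set (Set Y)) : Prop :=
  ∀ A : ℕ → Set Y, (∀ n, A n ∈ cA ∧ (A n).Infinite) →
    ∃ B ∈ cB, {n : ℕ | (A n ∩ B).Nonempty}.Infinite

/-- An ω-cover: a nontrivial open cover such that every finite set lies in some member. -/
def IsOmegaCover {Y : Type u} [TopologicalSpace Y] (cU : Set (Set Y)) : Prop :=
  (∀ U ∈ cU, IsOpen U) ∧ ⋃₀ cU = Set.univ ∧ Set.univ ∉ cU ∧
    ∀ F : Set Y, F.Finite → ∃ U ∈ cU, F ⊆ U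

/-- A k-cover: a nontrivial open cover such that every compact set lies in some member. -/
def IsKCover {Y : Type u} [TopologicalSpace Y] (cU : Set (Set Y)) : Prop :=
  (∀ U ∈ cU, IsOpen U) ∧ ⋃₀ cU = Set.univ ∧ Set.univ ∉ cU ∧
    ∀ K : Set Y, IsCompact K → ∃ U ∈ cU, K ⊆ U

/-- A γ-cover: an infinite open cover such that each finite set is contained in all but
finitely many members. -/
def IsGammaCover {Y : Type u} [TopologicalSpace Y] (cU : Set (Set Y)) : Prop :=
  (∀ U ∈ cU, IsOpen U) ∧ ⋃₀ cU = Set.univ ∧ cU.Infinite ∧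
    ∀ F : Set Y, F.Finite → {U ∈ cU | ¬ F ⊆ U}.Finite

/-- A γₖ-cover: an infinite open cover such that each compact set is contained in all but
finitely many members. -/
def IsGammaKCover {Y : Type u} [TopologicalSpace Y] (cU : Set (Set Y)) : Prop :=
  (∀ U ∈ cU, IsOpen U) ∧ ⋃₀ cU = Set.univ ∧ cU.Infinite ∧
    ∀ K : Set Y, IsCompact K → {U ∈ cU | ¬ K ⊆ U}.Finite

/-- `Ω`: the collection of ω-covers of `Y`. -/
def OmegaCovers (Y : Type u) [TopologicalSpace Y] : Set (Set (Set Y)) :=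
  {cU | IsOmegaCover cU}

/-- `𝒦`: the collection of k-covers of `Y`. -/
def KCovers (Y : Type u) [TopologicalSpace Y] : Set (Set (Set Y)) :=
  {cU | IsKCover cU}

/-- `Γ`: the collection of γ-covers of `Y`. -/
def GammaCovers (Y : Type u) [TopologicalSpace Y] : Set (Set (Set Y)) :=
  {cU | IsGammaCover cU}

/-- `Γₖ`: the collection of γₖ-covers of `Y`. -/
def GammaKCovers (Y : Type u) [TopologicalSpace Y] : Set (Set (Set Y)) :=
  {cU | IsGammaKCover cU}

/-- `Y` is ω-Lindelöf if every ω-cover contains a countable ω-cover. -/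
def OmegaLindelof (Y : Type u) [TopologicalSpace Y] : Prop :=
  ∀ cU : Set (Set Y), IsOmegaCover cU →
    ∃ cV ⊆ cU, cV.Countable ∧ IsOmegaCover cV

/-- `Y` is k-Lindelöf if every k-cover contains a countable k-cover. -/
def KLindelof (Y : Type u) [TopologicalSpace Y] : Prop :=
  ∀ cU : Set (Set Y), IsKCover cU →
    ∃ cV ⊆ cU, cV.Countable ∧ IsKCover cV

/-- `Ω_y`: subsets of `Y \ {y}` having `y` in their closure. -/
def OmegaPt {Y : Type u} [TopologicalSpace Y] (y : Y) : Set (Set Y) :=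
  {A | A ⊆ {y}ᶜ ∧ y ∈ closure A}

/-- `Σ_y`: (ranges of) nontrivial sequences in `Y` converging to `y`. -/
def SigmaPt {Y : Type u} [TopologicalSpace Y] (y : Y) : Set (Set Y) :=
  {S | ∃ f : ℕ → Y, (∀ n, f n ≠ y) ∧
    Filter.Tendsto f Filter.atTop (nhds y) ∧ S = Set.range f}

/-- `2^X`: the hyperspace of closed subsets of `X`. -/
abbrev HClosed (X : Type u) [TopologicalSpace X] : Type u := {F : Set X // IsClosed F}

/-- The upper Fell topology on `2^X`, generated by the base
`{(Kᶜ)⁺ : K nonempty compact} ∪ {univ}`. -/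
instance fellTopology (X : Type u) [TopologicalSpace X] : TopologicalSpace (HClosed X) :=
  TopologicalSpace.generateFrom
    ({S | ∃ K : Set X, IsCompact K ∧ K.Nonempty ∧ S = {F : HClosed X | F.1 ⊆ Kᶜ}} ∪
      {Set.univ})

/-- `𝕂(X)`: the hyperspace of nonempty compact subsets of `X`. -/
abbrev KSp (X : Type u) [TopologicalSpace X] : Type u := {K : Set X // IsCompact K ∧ K.Nonempty}

/-- The upper Vietoris topology on `𝕂(X)`, generated by the base of sets `U⁺`, `U` open. -/
instance upperVietorisK (X : Type u) [TopologicalSpace X] : TopologicalSpace (KSp X) :=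
  TopologicalSpace.generateFrom
    {S | ∃ U : Set X, IsOpen U ∧ S = {K : KSp X | K.1 ⊆ U}}

/-- `𝔽(X)`: the hyperspace of nonempty finite subsets of `X`. -/
abbrev FSp (X : Type u) [TopologicalSpace X] : Type u := {F : Set X // F.Finite ∧ F.Nonempty}

/-- The upper Vietoris topology on `𝔽(X)`, generated by the base of sets `U⁺`, `U` open. -/
instance upperVietorisF (X : Type u) [TopologicalSpace X] : TopologicalSpace (FSp X) :=
  TopologicalSpace.generateFrom
    {S | ∃ U : Set X, IsOpen U ∧ S = {F : FSp X | F.1 ⊆ U}}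

/-- For a topological group `G` with local base `Be` at the neutral element:
`Ω(e) = {ω(U) : U ∈ Be, no nonempty finite F with F·U = G}` where
`ω(U) = {F·U : F nonempty finite}`. -/
def OmegaE {G : Type u} [Group G] (Be : Set (Set G)) : Set (Set (Set G)) :=
  {cU | ∃ U ∈ Be,
    (¬ ∃ F : Set G, F.Finite ∧ F.Nonempty ∧ F * U = Set.univ) ∧
    cU = {V | ∃ F : Set G, F.Finite ∧ F.Nonempty ∧ V = F * U}}

/-- For a topological group `G` with local base `Be` at the neutral element:
`𝒦(e) = {k(U) : U ∈ Be, no nonempty compact K with K·U = G}` where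
`k(U) = {K·U : K nonempty compact}`. -/
def KcalE {G : Type u} [Group G] [TopologicalSpace G] (Be : Set (Set G)) :
    Set (Set (Set G)) :=
  {cU | ∃ U ∈ Be,
    (¬ ∃ K : Set G, IsCompact K ∧ K.Nonempty ∧ K * U = Set.univ) ∧
    cU = {V | ∃ K : Set G, IsCompact K ∧ K.Nonempty ∧ V = K * U}}

/-- Player ONE has a winning strategy in the game `G₁(𝒜,ℬ)`: a strategy assigns to each finite
sequence of TWO's previous moves a member of `𝒜`; it is winning if for every play in which
TWO's moves follow it, the set of TWO's moves is not in `ℬ`. -/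
def OneHasWinningStrategy {Y : Type u} (cA cB : Set (Set Y)) : Prop :=
  ∃ σ : List Y → Set Y, (∀ l : List Y, σ l ∈ cA) ∧
    ∀ b : ℕ → Y, (∀ n, b n ∈ σ (List.ofFn fun i : Fin n => b i)) → Set.range b ∉ cB


/-! ### Auxiliary lemmas -/

section Aux

variable {X : Type u} [TopologicalSpace X]

/-- A choice of a point outside a set (junk if none exists). -/
noncomputable def outPt [Nonempty X] (U : Set X) : X :=
  Classical.epsilon fun y => y ∉ U

lemma outPt_not_mem [Nonempty X] {U : Set X} (h : U ≠ Set.univ) : outPt U ∉ U :=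
  Classical.epsilon_spec ((Set.ne_univ_iff_exists_notMem U).1 h)

lemma isOmegaCover_mk {cU : Set (Set X)} (h1 : ∀ U ∈ cU, IsOpen U) (h2 : Set.univ ∉ cU)
    (h3 : ∀ F : Set X, F.Finite → ∃ U ∈ cU, F ⊆ U) : IsOmegaCover cU := by
  refine ⟨h1, ?_, h2, h3⟩
  rw [Set.eq_univ_iff_forall]
  intro y
  obtain ⟨U, hU, hsub⟩ := h3 {y} (Set.finite_singleton y)
  exact Set.mem_sUnion.2 ⟨U, hU, hsub rfl⟩

lemma omega_core [Nonempty X] {cU : Set (Set X)} (h : IsOmegaCover cU) {F : Set X}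
    (hF : F.Finite) {cG : Set (Set X)} (hG : cG.Finite) :
    ∃ U ∈ cU, U ∉ cG ∧ F ⊆ U := by
  obtain ⟨U, hU, hsub⟩ := h.2.2.2 (F ∪ outPt '' (cG ∩ cU))
    (hF.union ((hG.inter_of_left _).image _))
  refine ⟨U, hU, fun hmem => ?_, (Set.subset_union_left).trans hsub⟩
  have h1 : outPt U ∈ U := hsub (Or.inr ⟨U, ⟨hmem, hU⟩, rfl⟩)
  exact outPt_not_mem (fun he => h.2.2.1 (he ▸ hU)) h1

lemma omega_infinite [Nonempty X] {cU : Set (Set X)} (h : IsOmegaCover cU) : cU.Infinite := by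
  intro hfin
  obtain ⟨U, hU, hnot, -⟩ := omega_core h Set.finite_empty hfin
  exact hnot hU

lemma omega_diff [Nonempty X] {cU cG : Set (Set X)} (h : IsOmegaCover cU) (hG : cG.Finite) :
    IsOmegaCover (cU \ cG) := by
  refine isOmegaCover_mk (fun U hU => h.1 U hU.1) (fun hm => h.2.2.1 hm.1) (fun F hF => ?_)
  obtain ⟨U, hU, hn, hs⟩ := omega_core h hF hG
  exact ⟨U, ⟨hU, hn⟩, hs⟩

lemma gamma_subset {cB cC : Set (Set X)} (hB : IsGammaCover cB) (hsub : cC ⊆ cB)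
    (hinf : cC.Infinite) : IsGammaCover cC := by
  have hbad : ∀ F : Set X, F.Finite → {U ∈ cC | ¬ F ⊆ U}.Finite := fun F hF =>
    (hB.2.2.2 F hF).subset (fun U hU => ⟨hsub hU.1, hU.2⟩)
  refine ⟨fun U hU => hB.1 U (hsub hU), ?_, hinf, hbad⟩
  rw [Set.eq_univ_iff_forall]
  intro y
  obtain ⟨U, hU⟩ := (hinf.diff (hbad {y} (Set.finite_singleton y))).nonempty
  have hyU : y ∈ U := by
    by_contra hy
    exact hU.2 ⟨hU.1, fun hs => hy (hs rfl)⟩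
  exact Set.mem_sUnion.2 ⟨U, hU.1, hyU⟩

lemma gamma_to_omega {cB : Set (Set X)} (hB : IsGammaCover cB) (hne : Set.univ ∉ cB) :
    IsOmegaCover cB := by
  refine isOmegaCover_mk hB.1 hne (fun F hF => ?_)
  obtain ⟨U, hU⟩ := (hB.2.2.1.diff (hB.2.2.2 F hF)).nonempty
  refine ⟨U, hU.1, ?_⟩
  by_contra hsub
  exact hU.2 ⟨hU.1, hsub⟩

lemma gamma_of_seq [Nonempty X] {b : ℕ → Set X} (hopen : ∀ n, IsOpen (b n))
    (hne : ∀ n, b n ≠ Set.univ) (hg : ∀ F : Set X, F.Finite → {n | ¬ F ⊆ b n}.Finite) :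
    IsGammaCover (Set.range b) := by
  have hbad : ∀ F : Set X, F.Finite → {U ∈ Set.range b | ¬ F ⊆ U}.Finite := by
    intro F hF
    apply ((hg F hF).image b).subset
    rintro U ⟨⟨n, rfl⟩, hnsub⟩
    exact ⟨n, hnsub, rfl⟩
  have hinf : (Set.range b).Infinite := by
    intro hfin
    obtain ⟨n, hn⟩ := ((hg _ (hfin.image outPt)).infinite_compl).nonempty
    have hn' : outPt '' Set.range b ⊆ b n := not_not.1 hn
    have h1 : outPt (b n) ∈ b n := hn' ⟨b n, ⟨n, rfl⟩, rfl⟩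
    exact outPt_not_mem (hne n) h1
  refine ⟨?_, ?_, hinf, hbad⟩
  · rintro U ⟨n, rfl⟩
    exact hopen n
  · rw [Set.eq_univ_iff_forall]
    intro y
    obtain ⟨n, hn⟩ := ((hg {y} (Set.finite_singleton y)).infinite_compl).nonempty
    have hy : y ∈ b n := (not_not.1 hn) rfl
    exact Set.mem_sUnion.2 ⟨b n, ⟨n, rfl⟩, hy⟩

/-- The γ-property: every ω-cover has a γ-subcover. -/
def GammaPropX (X : Type u) [TopologicalSpace X] : Prop :=
  ∀ cU : Set (Set X), IsOmegaCover cU → ∃ cG ⊆ cU, IsGammaCover cG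

lemma s1_gammaProp (hs : S1 (OmegaCovers X) (GammaCovers X)) : GammaPropX X := by
  intro cU hU
  obtain ⟨b, hb1, hb2⟩ := hs (fun _ => cU) (fun _ => hU)
  refine ⟨Set.range b, ?_, hb2⟩
  rintro U ⟨n, rfl⟩
  exact hb1 n

lemma alpha4_gammaProp [Nonempty X] (hL : OmegaLindelof X)
    (ha : Alpha4 (OmegaCovers X) (GammaCovers X)) : GammaPropX X := by
  intro cU hU
  obtain ⟨cV, hVU, hVc, hV⟩ := hL cU hU
  have hVi : cV.Infinite := omega_infinite hV
  have hcnt : Countable ↥cV := hVc.to_subtype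
  have hinft : Infinite ↥cV := hVi.to_subtype
  obtain ⟨d⟩ := nonempty_denumerable ↥cV
  let V : ℕ → Set X := fun n => ((Denumerable.eqv ↥cV).symm n : ↥cV).1
  have hVinj : Function.Injective V := fun a b h =>
    (Denumerable.eqv ↥cV).symm.injective (Subtype.coe_injective h)
  have hVmem : ∀ n, V n ∈ cV := fun n => ((Denumerable.eqv ↥cV).symm n).2
  have hVsurj : ∀ U ∈ cV, ∃ n, V n = U := fun U hU =>
    ⟨Denumerable.eqv ↥cV ⟨U, hU⟩, by simp [V]⟩
  let A : ℕ → Set (Set X) := fun n => V '' Set.Ici n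
  have hAeq : ∀ n, A n = cV \ (V '' Set.Iio n) := by
    intro n
    ext U
    constructor
    · rintro ⟨k, hk, rfl⟩
      refine ⟨hVmem k, ?_⟩
      rintro ⟨k', hk', he⟩
      have := hVinj he
      subst this
      exact absurd (Set.mem_Iio.1 hk') (not_lt.2 (Set.mem_Ici.1 hk))
    · rintro ⟨hUV, hnot⟩
      obtain ⟨k, rfl⟩ := hVsurj U hUV
      refine ⟨k, ?_, rfl⟩
      by_contra hk
      exact hnot ⟨k, Set.mem_Iio.2 (not_le.1 hk), rfl⟩
  have hAome : ∀ n, IsOmegaCover (A n) := fun n => by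
    rw [hAeq n]
    exact omega_diff hV ((Set.finite_Iio n).image V)
  have hAinf : ∀ n, (A n).Infinite := fun n =>
    (Set.Ici_infinite n).image hVinj.injOn
  obtain ⟨B, hBΓ, hT⟩ := ha A (fun n => ⟨hAome n, hAinf n⟩)
  have hK : {k | V k ∈ B}.Infinite := by
    intro hKf
    obtain ⟨N, hN⟩ := hKf.bddAbove
    obtain ⟨n, hnT, hn⟩ := (hT.diff (Set.finite_Iic N)).nonempty
    obtain ⟨W, hWA, hWB⟩ := hnT
    obtain ⟨k, hk, rfl⟩ := hWA
    have hkK : k ∈ {k | V k ∈ B} := hWB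
    have h4 : k ≤ N := hN hkK
    have h5 : n ≤ k := hk
    have h6 : ¬ n ≤ N := hn
    omega
  refine ⟨V '' {k | V k ∈ B}, ?_, ?_⟩
  · rintro U ⟨k, -, rfl⟩
    exact hVU (hVmem k)
  · refine gamma_subset hBΓ ?_ (hK.image hVinj.injOn)
    rintro U ⟨k, hk, rfl⟩
    exact hk

lemma gammaProp_s1 [T1Space X] [Infinite X] (hA' : GammaPropX X) :
    S1 (OmegaCovers X) (GammaCovers X) := by
  intro A hA
  let x : ℕ ↪ X := Infinite.natEmbedding X
  let W : Set (Set X) := {W | ∃ k : ℕ, ∃ f : ℕ → Set X, (∀ i ≤ k, f i ∈ A i) ∧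
      W = (⋂ i ∈ Set.Iic k, f i) \ {x (k + 1)} ∧ ∀ i ≤ k, x i ∈ W}
  have hW : IsOmegaCover W := by
    refine isOmegaCover_mk ?_ ?_ ?_
    · rintro U ⟨k, f, hf, rfl, -⟩
      exact ((Set.finite_Iic k).isOpen_biInter (fun i hi => (hA i).1 _ (hf i hi))).sdiff
        isClosed_singleton
    · rintro ⟨k, f, hf, he, -⟩
      have h1 : x (k + 1) ∈ (Set.univ : Set X) := Set.mem_univ _
      rw [he] at h1
      exact h1.2 rfl
    · intro F hF
      have hSfin : (x ⁻¹' F).Finite := hF.preimage x.injective.injOn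
      obtain ⟨n, hn⟩ := ((hSfin.union (Set.finite_singleton 0)).infinite_compl).nonempty
      have hn1 : n ∉ x ⁻¹' F := fun h => hn (Or.inl h)
      have hn0 : n ≠ 0 := fun h => hn (Or.inr h)
      set k := n - 1 with hk
      have hkn : k + 1 = n := by omega
      have hsel : ∀ i, ∃ U ∈ A i, F ∪ x '' Set.Iic k ⊆ U := fun i =>
        (hA i).2.2.2 _ (hF.union ((Set.finite_Iic k).image x))
      choose f hf1 hf2 using hsel
      have hxnot : x (k + 1) ∉ F ∪ x '' Set.Iic k := by
        rintro (h | ⟨i, hi, he⟩)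
        · exact hn1 (hkn ▸ h)
        · have h7 := x.injective he
          have h8 : i ≤ k := hi
          omega
      have hFFW : F ∪ x '' Set.Iic k ⊆ (⋂ i ∈ Set.Iic k, f i) \ {x (k + 1)} := by
        intro y hy
        refine ⟨Set.mem_biInter fun i hi => hf2 i hy, fun he => hxnot ?_⟩
        rw [Set.mem_singleton_iff] at he
        rwa [he] at hy
      refine ⟨(⋂ i ∈ Set.Iic k, f i) \ {x (k + 1)},
        ⟨k, f, fun i _ => hf1 i, rfl, fun i hi => hFFW (Or.inr ⟨i, hi, rfl⟩)⟩,
        fun y hy => hFFW (Or.inl hy)⟩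
  obtain ⟨G, hGW, hGγ⟩ := hA' W hW
  let e : ℕ ↪ ↥G := hGγ.2.2.1.natEmbedding
  let g : ℕ → Set X := fun j => (e j).1
  have hginj : Function.Injective g := fun a b h => e.injective (Subtype.ext h)
  have hgG : ∀ j, g j ∈ G := fun j => (e j).2
  have hw : ∀ j, ∃ k : ℕ, ∃ f : ℕ → Set X, (∀ i ≤ k, f i ∈ A i) ∧
      g j = (⋂ i ∈ Set.Iic k, f i) \ {x (k + 1)} ∧ ∀ i ≤ k, x i ∈ g j := fun j => hGW (hgG j)
  choose k f hf1 hf2 hf3 using hw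
  have hbadj : ∀ F : Set X, F.Finite → {j | ¬ F ⊆ g j}.Finite := by
    intro F hF
    exact ((hGγ.2.2.2 F hF).preimage hginj.injOn).subset (fun j hj => ⟨hgG j, hj⟩)
  have hlev : ∀ m : ℕ, {j | k j < m}.Finite := by
    intro m
    apply (hbadj (x '' Set.Iic m) ((Set.finite_Iic m).image x)).subset
    intro j (hj : k j < m) hsub
    have hx : x (k j + 1) ∈ x '' Set.Iic m := ⟨k j + 1, Set.mem_Iic.2 (by omega), rfl⟩
    have h2 := hsub hx
    rw [hf2 j] at h2
    exact h2.2 rfl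
  have hsel : ∀ m : ℕ, ∃ j, m < j ∧ m ≤ k j := by
    intro m
    obtain ⟨j, hj⟩ := (((hlev m).union (Set.finite_Iic m)).infinite_compl).nonempty
    have hj1 : ¬ k j < m := fun h => hj (Or.inl h)
    have hj2 : ¬ j ≤ m := fun h => hj (Or.inr h)
    exact ⟨j, by omega, by omega⟩
  choose jm hjm1 hjm2 using hsel
  have hbmem : ∀ m, f (jm m) m ∈ A m := fun m => hf1 (jm m) m (hjm2 m)
  have hgb : ∀ m, g (jm m) ⊆ f (jm m) m := by
    intro m
    rw [hf2 (jm m)]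
    exact Set.diff_subset.trans (Set.biInter_subset_of_mem (Set.mem_Iic.2 (hjm2 m)))
  refine ⟨fun m => f (jm m) m, hbmem, ?_⟩
  refine gamma_of_seq (fun m => (hA m).1 _ (hbmem m))
    (fun m he => (hA m).2.2.1 (he ▸ hbmem m)) ?_
  intro F hF
  apply ((hbadj F hF).biUnion (fun j _ => Set.finite_Iio j)).subset
  intro m hm
  have h1 : ¬ F ⊆ g (jm m) := fun hs => hm (hs.trans (hgb m))
  exact Set.mem_biUnion h1 (hjm1 m)

lemma s1_alpha2 [Nonempty X] (hs : S1 (OmegaCovers X) (GammaCovers X)) (hp : GammaPropX X) :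
    Alpha2 (OmegaCovers X) (GammaCovers X) := by
  intro A hA
  have h1 : ∀ n, ∃ cG ⊆ A n, IsGammaCover cG := fun n => hp (A n) (hA n).1
  choose cG hsub hgam using h1
  let e : ∀ n, ℕ ↪ ↥(cG n) := fun n => (hgam n).2.2.1.natEmbedding
  let g : ℕ → ℕ → Set X := fun n k => (e n k).1
  have hginj : ∀ n, Function.Injective (g n) := fun n a b h => (e n).injective (Subtype.ext h)
  have hgmem : ∀ n r, g n r ∈ cG n := fun n r => (e n r).2
  let P : ℕ → ℕ → Set (Set X) := fun n j => Set.range fun i => g n (Nat.pair j i)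
  have hPsub : ∀ n j, P n j ⊆ cG n := by
    rintro n j U ⟨i, rfl⟩
    exact hgmem n _
  have hPinf : ∀ n j, (P n j).Infinite := fun n j =>
    Set.infinite_range_of_injective (fun a b h => (Nat.pair_eq_pair.1 (hginj n h)).2)
  have hPγ : ∀ n j, IsGammaCover (P n j) := fun n j =>
    gamma_subset (hgam n) (hPsub n j) (hPinf n j)
  have hPome : ∀ n j, IsOmegaCover (P n j) := fun n j =>
    gamma_to_omega (hPγ n j) (fun hm => (hA n).1.2.2.1 (hsub n (hPsub n j hm)))
  obtain ⟨b, hb1, hb2⟩ := hs (fun r => P (Nat.unpair r).1 (Nat.unpair r).2)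
    (fun r => hPome _ _)
  refine ⟨Set.range b, hb2, ?_⟩
  intro n
  have hc1 : ∀ j, b (Nat.pair n j) ∈ P n j := by
    intro j
    have := hb1 (Nat.pair n j)
    rwa [Nat.unpair_pair] at this
  have hcinj : Function.Injective (fun j => b (Nat.pair n j)) := by
    intro a a' h
    obtain ⟨i, hi⟩ := hc1 a
    obtain ⟨i', hi'⟩ := hc1 a'
    have h2 : g n (Nat.pair a i) = g n (Nat.pair a' i') := hi.trans (h.trans hi'.symm)
    exact (Nat.pair_eq_pair.1 (hginj n h2)).1
  apply Set.infinite_of_injective_forall_mem hcinj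
  intro j
  exact ⟨hsub n (hPsub n j (hc1 j)), ⟨Nat.pair n j, rfl⟩⟩

end Aux

/-- Theorem (α₂/α₃/α₄/S₁ for (Ω,Γ) in ω-Lindelöf spaces). -/
theorem stmt0 (X : Type u) [TopologicalSpace X] [T2Space X] [Infinite X]
    (hL : OmegaLindelof X) :
    [Alpha2 (OmegaCovers X) (GammaCovers X),
     Alpha3 (OmegaCovers X) (GammaCovers X),
     Alpha4 (OmegaCovers X) (GammaCovers X),
     S1 (OmegaCovers X) (GammaCovers X)].TFAE := by
  tfae_have 1 → 2
  · intro h A hA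
    obtain ⟨B, hB1, hB2⟩ := h A hA
    refine ⟨B, hB1, ?_⟩
    have h2 : {n : ℕ | (A n ∩ B).Infinite} = Set.univ := Set.eq_univ_of_forall hB2
    rw [h2]
    exact Set.infinite_univ
  tfae_have 2 → 3
  · intro h A hA
    obtain ⟨B, hB1, hB2⟩ := h A hA
    exact ⟨B, hB1, hB2.mono (fun n hn => hn.nonempty)⟩
  tfae_have 3 → 4
  · exact fun h => gammaProp_s1 (alpha4_gammaProp hL h)
  tfae_have 4 → 1
  · exact fun h => s1_alpha2 h (s1_gammaProp h)
  tfae_finish
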